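/- In the point-to-point function update problem with full-rank m×n matrix A and sparsity ε, for any valid scheme (H, D), dim(C_H ∩ C_A) ≥ min(m, 2ε). Consequently, the communication cost ℓ = rank(H) of any valid scheme satisfies ℓ ≥ min(m, 2ε). -/

import Mathlib

open Matrix

section Defs
variable {F : Type*} [Field F]

/-- Rank of the submatrix of `G` consisting of the columns indexed by `S`. -/
noncomputable def colRank {m α : Type*} [Fintype α] (G : Matrix m α F) (S : Finset α) : ℕ :=
  (G.submatrix id (fun j : S => (j : α))).rank

/-- The row space of a matrix. -/
def rowSpan {m α : Type*} (G : Matrix m α F) : Submodule F (α → F) :=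
  Submodule.span F (Set.range fun i => G i)

/-- Rank of the restriction (puncturing) of a code `C` to the coordinates in `S`. -/
noncomputable def restrRank {α : Type*} (C : Submodule F (α → F)) (S : Finset α) : ℕ :=
  Module.finrank F (C.map (LinearMap.funLeft F F (fun j : S => (j : α))))

/-- Shortening of a code on coordinates `α ⊕ β` to the coordinates `α`. -/
noncomputable def shortenSum {α β : Type*} (D : Submodule F ((α ⊕ β) → F)) :
    Submodule F (α → F) :=
  Submodule.map (LinearMap.funLeft F F Sum.inl)
    (D ⊓ (⨅ j : β, LinearMap.ker
      (LinearMap.proj (R := F) (Sum.inr j) : ((α ⊕ β) → F) →ₗ[F] F)))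

/-- A valid (zero-error, worst case) scheme for the point-to-point function-update problem. -/
def IsValidScheme [DecidableEq F] {n m ℓ : ℕ} (A : Matrix (Fin m) (Fin n) F)
    (H : Matrix (Fin ℓ) (Fin n) F) (ε : ℕ)
    (D : (Fin ℓ → F) → (Fin m → F) → (Fin m → F)) : Prop :=
  ∀ X E : Fin n → F, hammingNorm E ≤ ε →
    D (H.mulVec (X + E)) (A.mulVec X) = A.mulVec (X + E)

end Defs

section Aux
variable {F : Type*} [Field F] [DecidableEq F]

lemma finrank_rowSpan {k : Type*} [Fintype k] {n : ℕ} (G : Matrix k (Fin n) F) :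
    Module.finrank F (rowSpan G) = G.rank := by
  rw [← Matrix.rank_transpose, Matrix.rank_eq_finrank_span_cols]
  rfl

lemma hammingNorm_neg' {n : ℕ} (x : Fin n → F) : hammingNorm (-x) = hammingNorm x := by
  unfold hammingNorm
  congr 1
  ext i
  simp

lemma split_low_weight {n ε : ℕ} (Z : Fin n → F) (hZ : hammingNorm Z ≤ 2 * ε) :
    ∃ E E' : Fin n → F, Z = E + E' ∧ hammingNorm E ≤ ε ∧ hammingNorm E' ≤ ε := by
  classical
  set S : Finset (Fin n) := {i | Z i ≠ 0} with hS
  have hcard : S.card = hammingNorm Z := rfl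
  obtain ⟨T, hTS, hTcard⟩ := Finset.exists_subset_card_eq (n := min S.card ε) (min_le_left _ _)
  refine ⟨fun i => if i ∈ T then Z i else 0, fun i => if i ∈ T then 0 else Z i, ?_, ?_, ?_⟩
  · funext i; by_cases h : i ∈ T <;> simp [h]
  · calc hammingNorm (fun i => if i ∈ T then Z i else 0)
        ≤ T.card := by
          apply Finset.card_le_card
          intro i hi
          simp only [Finset.mem_filter, Finset.mem_univ, true_and] at hi ⊢
          by_contra h
          simp [h] at hi
      _ ≤ ε := by omega
  · calc hammingNorm (fun i => if i ∈ T then 0 else Z i)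
        ≤ (S \ T).card := by
          apply Finset.card_le_card
          intro i hi
          simp only [Finset.mem_filter, Finset.mem_univ, true_and, hammingNorm] at hi
          by_cases h : i ∈ T
          · simp [h] at hi
          · simp only [h, if_false] at hi
            exact Finset.mem_sdiff.2 ⟨by simp [hS, hi], h⟩
      _ ≤ ε := by
          rw [Finset.card_sdiff_of_subset hTS]
          omega

lemma low_weight_span {n t : ℕ} (W K : Submodule F (Fin n → F))
    (hdim : n ≤ Module.finrank F W + t)
    (hlow : ∀ w ∈ W, hammingNorm w ≤ t + 1 → w ∈ K) : W ≤ K := by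
  classical
  suffices h : ∀ N : ℕ, ∀ w ∈ W, hammingNorm w ≤ N → w ∈ K by
    intro w hw
    exact h (hammingNorm w) w hw le_rfl
  intro N
  induction N with
  | zero =>
    intro w hw hwt
    have : w = 0 := hammingNorm_eq_zero.1 (Nat.le_zero.1 hwt)
    simp [this]
  | succ N ih =>
    intro w hw hwt
    by_cases hsmall : hammingNorm w ≤ t + 1
    · exact hlow w hw hsmall
    push_neg at hsmall
    set S : Finset (Fin n) := {i | w i ≠ 0} with hSdef
    have hScard : S.card = hammingNorm w := rfl
    -- the restriction map to coordinates outside S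
    set φ : W →ₗ[F] ({i : Fin n // i ∉ S} → F) :=
      (LinearMap.funLeft F F (Subtype.val : {i : Fin n // i ∉ S} → Fin n)).comp W.subtype with hφ
    set W' : Submodule F (Fin n → F) := (LinearMap.ker φ).map W.subtype with hW'
    have hW'le : W' ≤ W := Submodule.map_subtype_le _ _
    have hW'mem : ∀ x ∈ W', ∀ i, i ∉ S → x i = 0 := by
      intro x hx i hi
      obtain ⟨y, hy, rfl⟩ := hx
      have := congrFun (LinearMap.mem_ker.1 hy) ⟨i, hi⟩
      exact this
    -- dimension count
    have hrange : Module.finrank F (LinearMap.range φ) ≤ n - S.card := by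
      have h1 : Module.finrank F (LinearMap.range φ) ≤
          Module.finrank F ({i : Fin n // i ∉ S} → F) := Submodule.finrank_le _
      have h2 : Module.finrank F ({i : Fin n // i ∉ S} → F) = n - S.card := by
        rw [Module.finrank_pi]
        rw [Fintype.card_subtype_compl]
        simp [Fintype.card_coe]
      omega
    have hrn : Module.finrank F (LinearMap.range φ) + Module.finrank F (LinearMap.ker φ) =
        Module.finrank F W := LinearMap.finrank_range_add_finrank_ker φ
    have hSn : S.card ≤ n := by
      have := Finset.card_le_card (Finset.subset_univ S)
      simpa using this
    have hW'rank : 2 ≤ Module.finrank F W' := by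
      have : Module.finrank F W' = Module.finrank F (LinearMap.ker φ) :=
        Submodule.finrank_map_subtype_eq W (LinearMap.ker φ)
      omega
    -- w ∈ W'
    have hwW' : w ∈ W' := by
      refine ⟨⟨w, hw⟩, LinearMap.mem_ker.2 ?_, rfl⟩
      funext i
      have : w (i : Fin n) = 0 := by
        by_contra h
        exact i.2 (by simp [hSdef, h])
      simpa [hφ, LinearMap.funLeft] using this
    -- find w' ∈ W' not in span {w}
    have hexists : ∃ w' ∈ W', w' ∉ Submodule.span F {w} := by
      by_contra hcon
      push_neg at hcon
      have hle : W' ≤ Submodule.span F {w} := hcon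
      have h1 : Module.finrank F W' ≤ Module.finrank F (Submodule.span F {w}) :=
        Submodule.finrank_mono hle
      have h2 : Module.finrank F (Submodule.span F ({w} : Set (Fin n → F))) ≤ 1 := by
        refine (finrank_span_le_card _).trans ?_
        simp
      omega
    obtain ⟨w', hw'W', hw'span⟩ := hexists
    have hw'W : w' ∈ W := hW'le hw'W'
    have hw'S : ∀ i, i ∉ S → w' i = 0 := hW'mem w' hw'W'
    -- pick j₀ with w j₀ ≠ 0
    have hwne : w ≠ 0 := by
      intro h
      rw [h, hammingNorm_zero] at hsmall
      omega
    obtain ⟨j₀, hj₀⟩ : ∃ j, w j ≠ 0 := by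
      by_contra h
      push_neg at h
      exact hwne (funext h)
    -- pick j₁ with w j₀ * w' j₁ ≠ w j₁ * w' j₀
    obtain ⟨j₁, hj₁⟩ : ∃ j, w j₀ * w' j ≠ w j * w' j₀ := by
      by_contra h
      push_neg at h
      apply hw'span
      rw [Submodule.mem_span_singleton]
      refine ⟨w' j₀ / w j₀, ?_⟩
      funext j
      have hj := h j
      simp only [Pi.smul_apply, smul_eq_mul]
      field_simp
      linear_combination -hj
    have hj₁S : j₁ ∈ S := by
      by_contra h
      have h1 : w j₁ = 0 := by
        by_contra h2
        exact h (by simp [hSdef, h2])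
      have h2 : w' j₁ = 0 := hw'S j₁ h
      rw [h1, h2] at hj₁
      simp at hj₁
    have hj₀S : j₀ ∈ S := by simp [hSdef, hj₀]
    -- the two auxiliary vectors
    have haux : ∀ j ∈ S, (w j • w' - w' j • w) ∈ K := by
      intro j hj
      apply ih _ (W.sub_mem (W.smul_mem _ hw'W) (W.smul_mem _ hw))
      calc hammingNorm (w j • w' - w' j • w) ≤ (S.erase j).card := by
            apply Finset.card_le_card
            intro i hi
            simp only [hammingNorm, Finset.mem_filter, Finset.mem_univ, true_and] at hi
            rw [Finset.mem_erase]
            constructor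
            · rintro rfl
              simp [sub_eq_zero, mul_comm] at hi
            · by_contra h
              have h1 : w i = 0 := by
                by_contra h2
                exact h (by simp [hSdef, h2])
              have h2 : w' i = 0 := hw'S i h
              simp [Pi.sub_apply, h1, h2] at hi
        _ ≤ N := by
            rw [Finset.card_erase_of_mem hj]
            omega
    have hu₀ : (w j₀ • w' - w' j₀ • w) ∈ K := haux j₀ hj₀S
    have hu₁ : (w j₁ • w' - w' j₁ • w) ∈ K := haux j₁ hj₁S
    -- combine
    have hc : (w j₀ * w' j₁ - w j₁ * w' j₀) • w =
        w j₁ • (w j₀ • w' - w' j₀ • w) - w j₀ • (w j₁ • w' - w' j₁ • w) := by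
      funext i
      simp only [Pi.smul_apply, Pi.sub_apply, smul_eq_mul]
      ring
    have hcK : (w j₀ * w' j₁ - w j₁ * w' j₀) • w ∈ K := by
      rw [hc]
      exact K.sub_mem (K.smul_mem _ hu₀) (K.smul_mem _ hu₁)
    have hcne : (w j₀ * w' j₁ - w j₁ * w' j₀) ≠ 0 := sub_ne_zero.2 hj₁
    have := K.smul_mem (w j₀ * w' j₁ - w j₁ * w' j₀)⁻¹ hcK
    rwa [smul_smul, inv_mul_cancel₀ hcne, one_smul] at this

lemma valid_kernel_sum {n m ℓ ε : ℕ} (A : Matrix (Fin m) (Fin n) F)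
    (H : Matrix (Fin ℓ) (Fin n) F)
    (D : (Fin ℓ → F) → (Fin m → F) → (Fin m → F))
    (hvalid : IsValidScheme A H ε D)
    (u v : Fin n → F) (hu : H.mulVec u = 0) (hv : A.mulVec v = 0)
    (hw : hammingNorm (u + v) ≤ 2 * ε) : A.mulVec (u + v) = 0 := by
  obtain ⟨E, E', hZ, hE, hE'⟩ := split_low_weight (u + v) hw
  have h1 := hvalid 0 E hE
  have h2 := hvalid v (-E') (by rwa [hammingNorm_neg'])
  have hveq : v + -E' = E + -u := by
    have hE'eq : E' = u + v - E := by rw [hZ]; abel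
    rw [hE'eq]; abel
  have harg1 : H.mulVec (0 + E) = H.mulVec (v + -E') := by
    rw [hveq, zero_add, Matrix.mulVec_add, Matrix.mulVec_neg, hu]
    abel
  have harg2 : (A.mulVec 0 : Fin m → F) = A.mulVec v := by
    rw [Matrix.mulVec_zero, hv]
  have h3 : A.mulVec (0 + E) = A.mulVec (v + -E') := by
    rw [← h1, ← h2, harg1, harg2]
  rw [zero_add, Matrix.mulVec_add, Matrix.mulVec_neg, hv, zero_add] at h3
  rw [hZ, Matrix.mulVec_add, h3]
  abel

end Aux
/-- for any valid point-to-point scheme,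
`dim(C_H ∩ C_A) ≥ min(m, 2ε)`, and hence the communication cost
`ℓ = rank H ≥ min(m, 2ε)`. -/
theorem valid_scheme_cost_lower_bound {F : Type*} [Field F] [Fintype F] [DecidableEq F]
    {n m ℓ ε : ℕ} (hm : m ≤ n)
    (A : Matrix (Fin m) (Fin n) F) (hA : A.rank = m)
    (H : Matrix (Fin ℓ) (Fin n) F)
    (D : (Fin ℓ → F) → (Fin m → F) → (Fin m → F))
    (hvalid : IsValidScheme A H ε D) :
    min m (2 * ε) ≤ Module.finrank F ((rowSpan H ⊓ rowSpan A : Submodule F (Fin n → F))) ∧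
      min m (2 * ε) ≤ H.rank := by
  classical
  have key : min m (2 * ε) ≤
      Module.finrank F ((rowSpan H ⊓ rowSpan A : Submodule F (Fin n → F))) := by
    by_contra hlt
    push_neg at hlt
    set d := Module.finrank F ((rowSpan H ⊓ rowSpan A : Submodule F (Fin n → F))) with hd
    have hdm : d < m := lt_of_lt_of_le hlt (min_le_left _ _)
    have hdε : d < 2 * ε := lt_of_lt_of_le hlt (min_le_right _ _)
    set B := Matrix.fromRows H A with hB
    set Kh := LinearMap.ker H.mulVecLin with hKh
    set Ka := LinearMap.ker A.mulVecLin with hKa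
    have hn : Module.finrank F (Fin n → F) = n := by simp
    have e1 : H.rank + Module.finrank F Kh = n := by
      have := LinearMap.finrank_range_add_finrank_ker H.mulVecLin
      rw [hn] at this
      exact this
    have e2 : A.rank + Module.finrank F Ka = n := by
      have := LinearMap.finrank_range_add_finrank_ker A.mulVecLin
      rw [hn] at this
      exact this
    have f5 : Kh ⊓ Ka = LinearMap.ker B.mulVecLin := by
      ext x
      simp [hKh, hKa, hB, Submodule.mem_inf, LinearMap.mem_ker, Matrix.mulVecLin_apply,
        Matrix.fromRows_mulVec, funext_iff, Sum.forall]
    have e3 : B.rank + Module.finrank F (Kh ⊓ Ka : Submodule F (Fin n → F)) = n := by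
      have := LinearMap.finrank_range_add_finrank_ker B.mulVecLin
      rw [hn] at this
      rw [f5]
      exact this
    have e4 : Module.finrank F ((Kh ⊔ Ka : Submodule F (Fin n → F))) +
        Module.finrank F ((Kh ⊓ Ka : Submodule F (Fin n → F))) =
        Module.finrank F Kh + Module.finrank F Ka :=
      Submodule.finrank_sup_add_finrank_inf_eq Kh Ka
    have f7 : rowSpan B = rowSpan H ⊔ rowSpan A := by
      have hfun : (fun i => B i) = Sum.elim (fun i => H i) (fun i => A i) := by
        funext i
        cases i <;> rfl
      rw [rowSpan, hfun, Set.Sum.elim_range, Submodule.span_union]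
      rfl
    have e5 : B.rank = Module.finrank F ((rowSpan H ⊔ rowSpan A : Submodule F (Fin n → F))) := by
      rw [← finrank_rowSpan, f7]
    have e6 : Module.finrank F ((rowSpan H ⊔ rowSpan A : Submodule F (Fin n → F))) + d =
        H.rank + A.rank := by
      rw [hd, ← finrank_rowSpan H, ← finrank_rowSpan A]
      exact Submodule.finrank_sup_add_finrank_inf_eq _ _
    -- apply the spanning lemma
    have hle : (Kh ⊔ Ka : Submodule F (Fin n → F)) ≤ Ka := by
      apply low_weight_span _ _ (t := d)
      · omega
      · intro w hw hwt
        obtain ⟨u, hu, v, hv, rfl⟩ := Submodule.mem_sup.1 hw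
        have hu' : H.mulVec u = 0 := by
          have := LinearMap.mem_ker.1 hu
          rwa [Matrix.mulVecLin_apply] at this
        have hv' : A.mulVec v = 0 := by
          have := LinearMap.mem_ker.1 hv
          rwa [Matrix.mulVecLin_apply] at this
        have := valid_kernel_sum A H D hvalid u v hu' hv' (by omega)
        rw [hKa, LinearMap.mem_ker, Matrix.mulVecLin_apply]
        exact this
    have heq : (Kh ⊔ Ka : Submodule F (Fin n → F)) = Ka := le_antisymm hle le_sup_right
    have hfs : Module.finrank F ((Kh ⊔ Ka : Submodule F (Fin n → F))) =
        Module.finrank F Ka := by rw [heq]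
    omega
  refine ⟨key, le_trans key ?_⟩
  rw [← finrank_rowSpan H]
  exact Submodule.finrank_mono inf_le_left
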